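/- Fix polytopes gamma (playing the role of gamma_k) and kappa_1,...,kappa_{k-1} in a real vector space. For J a subset of {1,...,k-1} define delta(J) = dim(gamma + sum_{j in J} kappa_j) - |J|. If delta(J) >= 0 for all J, then the collection {J : delta(J) = 0} is closed under unions and intersections; in particular, if it is nonempty it has a unique maximal element. -/

import Mathlib

open scoped Pointwise

/-- A polytope: the convex hull of a nonempty finite set of points. -/
def IsPolytope {V : Type*} [AddCommGroup V] [Module ℝ V] (P : Set V) : Prop :=
  ∃ s : Finset V, s.Nonempty ∧ P = convexHull ℝ (s : Set V)

/-- The dimension of (the affine span of) a subset of a real vector space. -/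
noncomputable def polyDim {V : Type*} [AddCommGroup V] [Module ℝ V] (P : Set V) : ℕ :=
  Module.finrank ℝ (affineSpan ℝ P).direction

/-- `δ(J) = dim(γ + ∑_{j ∈ J} κ_j) - |J|`. -/
noncomputable def deltaFn {V : Type*} [AddCommGroup V] [Module ℝ V] {m : ℕ}
    (γ : Set V) (κ : Fin m → Set V) (J : Finset (Fin m)) : ℤ :=
  (polyDim (γ + ∑ j ∈ J, κ j) : ℤ) - J.card

section Aux

variable {V : Type*} [AddCommGroup V] [Module ℝ V]

lemma aux_vectorSpan_add {A B : Set V} (hA : A.Nonempty) (hB : B.Nonempty) :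
    vectorSpan ℝ (A + B) = vectorSpan ℝ A ⊔ vectorSpan ℝ B := by
  apply le_antisymm
  · rw [vectorSpan_def, Submodule.span_le]
    rintro x ⟨p, ⟨a, ha, b, hb, rfl⟩, q, ⟨a', ha', b', hb', rfl⟩, rfl⟩
    have hx : (a + b) -ᵥ (a' + b') = (a -ᵥ a') + (b -ᵥ b') := by
      simp only [vsub_eq_sub]; abel
    show (a + b) -ᵥ (a' + b') ∈ _
    rw [hx]
    exact Submodule.add_mem _
      (Submodule.mem_sup_left (vsub_mem_vectorSpan ℝ ha ha'))
      (Submodule.mem_sup_right (vsub_mem_vectorSpan ℝ hb hb'))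
  · obtain ⟨a₀, ha₀⟩ := hA; obtain ⟨b₀, hb₀⟩ := hB
    apply sup_le
    · rw [vectorSpan_def, Submodule.span_le]
      rintro x ⟨a, ha, a', ha', rfl⟩
      have hx : a -ᵥ a' = (a + b₀) -ᵥ (a' + b₀) := by simp [vsub_eq_sub]
      show a -ᵥ a' ∈ _
      rw [hx]
      exact vsub_mem_vectorSpan ℝ (Set.add_mem_add ha hb₀) (Set.add_mem_add ha' hb₀)
    · rw [vectorSpan_def, Submodule.span_le]
      rintro x ⟨b, hb, b', hb', rfl⟩
      have hx : b -ᵥ b' = (a₀ + b) -ᵥ (a₀ + b') := by simp [vsub_eq_sub]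
      show b -ᵥ b' ∈ _
      rw [hx]
      exact vsub_mem_vectorSpan ℝ (Set.add_mem_add ha₀ hb) (Set.add_mem_add ha₀ hb')

lemma aux_sum_nonempty {m : ℕ} {κ : Fin m → Set V} (hκ : ∀ j, (κ j).Nonempty)
    (J : Finset (Fin m)) : (∑ j ∈ J, κ j).Nonempty := by
  classical
  induction J using Finset.cons_induction with
  | empty => exact ⟨0, by simp [Set.zero_mem_zero]⟩
  | cons a s ha ih =>
    rw [Finset.sum_cons]
    exact (hκ a).add ih

lemma aux_span_sum {m : ℕ} {γ : Set V} {κ : Fin m → Set V}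
    (hγ : γ.Nonempty) (hκ : ∀ j, (κ j).Nonempty) (J : Finset (Fin m)) :
    vectorSpan ℝ (γ + ∑ j ∈ J, κ j)
      = vectorSpan ℝ γ ⊔ J.sup (fun j => vectorSpan ℝ (κ j)) := by
  classical
  induction J using Finset.cons_induction with
  | empty => simp
  | cons a s ha ih =>
    rw [Finset.sum_cons, Finset.sup_cons, ← add_assoc, add_comm γ (κ a), add_assoc,
      aux_vectorSpan_add (hκ a) (hγ.add (aux_sum_nonempty hκ s)), ih]
    rw [sup_comm (vectorSpan ℝ (κ a)) _, sup_assoc, sup_comm (vectorSpan ℝ (κ a)) _,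
      ← sup_assoc]

lemma aux_polytope_span_fd {P : Set V} (hP : IsPolytope P) :
    (P.Nonempty ∧ FiniteDimensional ℝ (vectorSpan ℝ P)) := by
  obtain ⟨s, hs, rfl⟩ := hP
  constructor
  · exact convexHull_nonempty_iff.mpr (by exact_mod_cast hs.to_set)
  · have h1 : vectorSpan ℝ (convexHull ℝ (s : Set V)) = vectorSpan ℝ (s : Set V) := by
      rw [← direction_affineSpan, ← direction_affineSpan, affineSpan_convexHull]
    rw [h1]
    exact finiteDimensional_vectorSpan_of_finite ℝ s.finite_toSet

end Aux

/-- If `δ(J) ≥ 0` for all `J ⊆ {1,...,k-1}`, then `{J : δ(J) = 0}` is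
closed under unions and intersections; in particular, if it is nonempty it has a (unique)
maximal element. -/
theorem delta_zero_closed_union_inter {V : Type*} [AddCommGroup V] [Module ℝ V]
    (k : ℕ) (γ : Set V) (κ : Fin (k - 1) → Set V)
    (hγ : IsPolytope γ) (hκ : ∀ j, IsPolytope (κ j))
    (h : ∀ J : Finset (Fin (k - 1)), 0 ≤ deltaFn γ κ J) :
    (∀ I J : Finset (Fin (k - 1)), deltaFn γ κ I = 0 → deltaFn γ κ J = 0 →
      deltaFn γ κ (I ∪ J) = 0 ∧ deltaFn γ κ (I ∩ J) = 0) ∧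
    ((∃ J, deltaFn γ κ J = 0) →
      ∃ J₀, deltaFn γ κ J₀ = 0 ∧ ∀ J, deltaFn γ κ J = 0 → J ⊆ J₀) := by
  classical
  obtain ⟨hγne, hγfd⟩ := aux_polytope_span_fd hγ
  have hκne : ∀ j, (κ j).Nonempty := fun j => (aux_polytope_span_fd (hκ j)).1
  have hκfd : ∀ j, FiniteDimensional ℝ (vectorSpan ℝ (κ j)) :=
    fun j => (aux_polytope_span_fd (hκ j)).2
  set f : Fin (k - 1) → Submodule ℝ V := fun j => vectorSpan ℝ (κ j) with hf
  set D : Finset (Fin (k - 1)) → Submodule ℝ V := fun J => vectorSpan ℝ γ ⊔ J.sup f with hD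
  have hDfd : ∀ J, FiniteDimensional ℝ (D J) := by
    intro J
    haveI := hγfd
    haveI : ∀ j, FiniteDimensional ℝ (f j) := hκfd
    infer_instance
  have hdim : ∀ J, polyDim (γ + ∑ j ∈ J, κ j) = Module.finrank ℝ (D J) := by
    intro J
    rw [polyDim, direction_affineSpan, aux_span_sum hγne hκne]
  -- the key submodularity inequality
  have key : ∀ I J : Finset (Fin (k - 1)),
      deltaFn γ κ (I ∪ J) + deltaFn γ κ (I ∩ J) ≤ deltaFn γ κ I + deltaFn γ κ J := by
    intro I J
    haveI := hDfd I
    haveI := hDfd J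
    haveI := hDfd (I ∪ J)
    haveI := hDfd (I ∩ J)
    have hsup : D (I ∪ J) = D I ⊔ D J := by
      simp only [hD, Finset.sup_union]
      exact sup_sup_distrib_left _ _ _
    have hinf : D (I ∩ J) ≤ D I ⊓ D J := by
      refine le_inf ?_ ?_ <;> exact
        sup_le_sup_left (Finset.sup_mono (by simp [Finset.inter_subset_left,
          Finset.inter_subset_right])) _
    have hrank : Module.finrank ℝ (D (I ∪ J)) + Module.finrank ℝ (D (I ∩ J))
        ≤ Module.finrank ℝ (D I) + Module.finrank ℝ (D J) := by
      have h1 : Module.finrank ℝ (D (I ∩ J)) ≤ Module.finrank ℝ ↥(D I ⊓ D J) :=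
        Submodule.finrank_mono (le_trans hinf (le_refl _))
      have h2 : Module.finrank ℝ ↥(D I ⊔ D J) + Module.finrank ℝ ↥(D I ⊓ D J)
          = Module.finrank ℝ (D I) + Module.finrank ℝ (D J) :=
        Submodule.finrank_sup_add_finrank_inf_eq (D I) (D J)
      rw [hsup]
      omega
    have hcard : (I ∪ J).card + (I ∩ J).card = I.card + J.card :=
      Finset.card_union_add_card_inter I J
    simp only [deltaFn, hdim]
    push_cast
    have := hrank
    omega
  have main : ∀ I J : Finset (Fin (k - 1)), deltaFn γ κ I = 0 → deltaFn γ κ J = 0 →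
      deltaFn γ κ (I ∪ J) = 0 ∧ deltaFn γ κ (I ∩ J) = 0 := by
    intro I J hI hJ
    have h1 := key I J
    have h2 := h (I ∪ J)
    have h3 := h (I ∩ J)
    constructor <;> omega
  refine ⟨main, ?_⟩
  rintro ⟨J, hJ⟩
  -- take a zero set of maximal cardinality
  have hne : (Finset.univ.filter (fun J => deltaFn γ κ J = 0)).Nonempty :=
    ⟨J, by simp [hJ]⟩
  obtain ⟨J₀, hJ₀mem, hJ₀max⟩ :=
    Finset.exists_max_image (Finset.univ.filter (fun J => deltaFn γ κ J = 0))
      Finset.card hne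
  have hJ₀ : deltaFn γ κ J₀ = 0 := by simpa using hJ₀mem
  refine ⟨J₀, hJ₀, fun I hI => ?_⟩
  have hu : deltaFn γ κ (I ∪ J₀) = 0 := (main I J₀ hI hJ₀).1
  have hle : (I ∪ J₀).card ≤ J₀.card := hJ₀max _ (by simp [hu])
  have : I ∪ J₀ = J₀ :=
    (Finset.eq_of_subset_of_card_le Finset.subset_union_right hle).symm
  intro x hx
  rw [← this]
  exact Finset.mem_union_left _ hx
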